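/- arXiv:1810.11664 — 3 statements merged into one kernel-verified Lean document; each statement's English description precedes it below -/
import Mathlib

section
/- Let $\rho_n = \exp(-1/(n\gamma))$ for $\gamma > 0$. Then $\lim_{n\to\infty} \frac{1-\exp(-2/(n\gamma))}{(1-\exp(-1/(n\gamma)))\,(n-(n-2)\exp(-1/(n\gamma)))} = \frac{2\gamma}{2\gamma+1}$. -/
open Filter Real

theorem stmt_0 (γ : ℝ) (hγ : 0 < γ) :
    Filter.Tendsto (fun n : ℕ =>
      (1 - Real.exp (-2 / (n * γ))) /
        ((1 - Real.exp (-1 / (n * γ))) * ((n : ℝ) - ((n : ℝ) - 2) * Real.exp (-1 / (n * γ)))))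
      Filter.atTop (nhds (2 * γ / (2 * γ + 1))) := by
  -- x n → 0
  have hx : Tendsto (fun n : ℕ => 1 / ((n : ℝ) * γ)) atTop (nhds 0) := by
    have : Tendsto (fun n : ℕ => (n : ℝ) * γ) atTop atTop :=
      tendsto_natCast_atTop_atTop.atTop_mul_const hγ
    have h2 := this.inv_tendsto_atTop
    exact h2.congr fun n => (one_div _).symm
  have hnegx : Tendsto (fun n : ℕ => -1 / ((n : ℝ) * γ)) atTop (nhds 0) := by
    have := hx.neg
    simp only [neg_zero] at this
    simpa [neg_div] using this
  have he : Tendsto (fun n : ℕ => Real.exp (-1 / ((n : ℝ) * γ))) atTop (nhds 1) := by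
    have := (Real.continuous_exp.tendsto 0).comp hnegx
    simpa [Function.comp_def] using this
  -- derivative argument : (1 - exp(-t))/t → 1 as t → 0
  have hderiv : HasDerivAt (fun t : ℝ => 1 - Real.exp (-t)) 1 0 := by
    have h1 : HasDerivAt (fun t : ℝ => Real.exp (-t)) (-1) 0 := by
      have hneg : HasDerivAt (fun t : ℝ => -t) (-1) (0:ℝ) := hasDerivAt_neg 0
      have he0 : HasDerivAt Real.exp (Real.exp (-0)) (-0) := Real.hasDerivAt_exp (-0)
      have := he0.comp 0 hneg
      simpa [Function.comp_def] using this
    simpa [Pi.sub_def] using (hasDerivAt_const (0:ℝ) (1:ℝ)).sub h1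
  have hslope : Tendsto (fun t : ℝ => (1 - Real.exp (-t)) / t) (nhdsWithin 0 {(0:ℝ)}ᶜ) (nhds 1) := by
    have := hasDerivAt_iff_tendsto_slope.mp hderiv
    refine this.congr fun t => ?_
    simp [slope_fun_def]
    ring
  have hxmem : ∀ᶠ n : ℕ in atTop, (1 : ℝ) / ((n : ℝ) * γ) ∈ ({(0:ℝ)}ᶜ : Set ℝ) := by
    filter_upwards [eventually_ge_atTop 1] with n hn
    have hn' : (0:ℝ) < (n : ℝ) := by exact_mod_cast Nat.lt_of_lt_of_le Nat.zero_lt_one hn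
    have : (0:ℝ) < 1 / ((n:ℝ) * γ) := by positivity
    simp only [Set.mem_compl_iff, Set.mem_singleton_iff]
    exact this.ne'
  have hcomp : Tendsto (fun n : ℕ => (1 - Real.exp (-(1 / ((n : ℝ) * γ)))) / (1 / ((n : ℝ) * γ)))
      atTop (nhds 1) :=
    hslope.comp (tendsto_nhdsWithin_iff.mpr ⟨hx, hxmem⟩)
  -- n * (1 - exp(-1/(nγ))) → 1/γ
  have hA : Tendsto (fun n : ℕ => (n : ℝ) * (1 - Real.exp (-1 / ((n : ℝ) * γ))))
      atTop (nhds (1 / γ)) := by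
    have h := hcomp.div_const γ
    have heq : ∀ᶠ n : ℕ in atTop,
        (1 - Real.exp (-(1 / ((n : ℝ) * γ)))) / (1 / ((n : ℝ) * γ)) / γ
          = (n : ℝ) * (1 - Real.exp (-1 / ((n : ℝ) * γ))) := by
      filter_upwards [eventually_ge_atTop 1] with n hn
      have hn' : (0:ℝ) < (n : ℝ) := by exact_mod_cast Nat.lt_of_lt_of_le Nat.zero_lt_one hn
      rw [neg_div]
      field_simp
    exact (Tendsto.congr' heq h)
  have hγ' : (0:ℝ) < 1 / γ + 2 := by positivity
  -- denominator and numerator limits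
  have hD : Tendsto (fun n : ℕ => (n : ℝ) * (1 - Real.exp (-1 / ((n : ℝ) * γ)))
      + 2 * Real.exp (-1 / ((n : ℝ) * γ))) atTop (nhds (1 / γ + 2)) := by
    have := hA.add ((he.const_mul 2))
    simpa using this
  have hN : Tendsto (fun n : ℕ => 1 + Real.exp (-1 / ((n : ℝ) * γ))) atTop (nhds 2) := by
    have := (tendsto_const_nhds (x := (1:ℝ)) (f := (atTop : Filter ℕ))).add he
    norm_num at this
    exact this
  have hQ : Tendsto (fun n : ℕ => (1 + Real.exp (-1 / ((n : ℝ) * γ))) /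
      ((n : ℝ) * (1 - Real.exp (-1 / ((n : ℝ) * γ))) + 2 * Real.exp (-1 / ((n : ℝ) * γ))))
      atTop (nhds (2 / (1 / γ + 2))) := hN.div hD hγ'.ne'
  have hval : 2 / (1 / γ + 2) = 2 * γ / (2 * γ + 1) := by
    rw [div_eq_div_iff (by positivity) (by positivity)]
    field_simp
    ring
  rw [← hval]
  refine hQ.congr' ?_
  filter_upwards [eventually_ge_atTop 1] with n hn
  have hn' : (0:ℝ) < (n : ℝ) := by exact_mod_cast Nat.lt_of_lt_of_le Nat.zero_lt_one hn
  set x : ℝ := 1 / ((n : ℝ) * γ) with hxdef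
  have hx0 : 0 < x := by positivity
  have hlt : Real.exp (-x) < 1 := by
    rw [Real.exp_lt_one_iff]; linarith
  have hne : 1 - Real.exp (-x) ≠ 0 := by linarith
  have h2 : Real.exp (-2 / ((n:ℝ) * γ)) = Real.exp (-1 / ((n:ℝ) * γ)) ^ 2 := by
    rw [← Real.exp_nat_mul]
    congr 1
    push_cast
    ring
  have hx1 : -1 / ((n:ℝ) * γ) = -x := by rw [hxdef]; ring
  rw [hx1] at h2 ⊢
  rw [h2]
  rw [div_eq_div_iff]
  · ring
  · have hpos : 0 < (n : ℝ) * (1 - Real.exp (-x)) + 2 * Real.exp (-x) := by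
      have := Real.exp_pos (-x)
      have : 0 < (n:ℝ) * (1 - Real.exp (-x)) := by
        apply mul_pos hn'; linarith
      nlinarith [Real.exp_pos (-x)]
    exact hpos.ne'
  · have h3 : (n:ℝ) - ((n:ℝ) - 2) * Real.exp (-x)
        = (n : ℝ) * (1 - Real.exp (-x)) + 2 * Real.exp (-x) := by ring
    rw [h3]
    have : 0 < (n : ℝ) * (1 - Real.exp (-x)) + 2 * Real.exp (-x) := by
      nlinarith [Real.exp_pos (-x)]
    exact mul_ne_zero hne this.ne'
end

section
/- Let $\mathbf{P}$ and $\tilde{\boldsymbol\Sigma}_1,\dots,\tilde{\boldsymbol\Sigma}_k$ be symmetric positive definite $n\times n$ matrices, and let $\boldsymbol\Lambda$ be the $kn\times kn$ block diagonal matrix with blocks $\tilde{\boldsymbol\Sigma}_l$. Then $\det\left(\mathbf{1}_k\mathbf{1}_k^T \otimes \mathbf{P} + \boldsymbol\Lambda\right) = \det(\mathbf{P})\cdot\det(\hat{\boldsymbol\Sigma})^{-1}\cdot\prod_{l=1}^k \det(\tilde{\boldsymbol\Sigma}_l)$, where $\hat{\boldsymbol\Sigma} = (\sum_{l=1}^k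 \tilde{\boldsymbol\Sigma}_l^{-1} + \mathbf{P}^{-1})^{-1}$ and $\otimes$ is the Kronecker product. -/
theorem stmt_12 (n k : ℕ) (P : Matrix (Fin n) (Fin n) ℝ) (hP : P.PosDef)
    (S : Fin k → Matrix (Fin n) (Fin n) ℝ) (hS : ∀ l, (S l).PosDef)
    (Λ : Matrix (Fin k × Fin n) (Fin k × Fin n) ℝ)
    (hΛ : ∀ p q, Λ p q = if p.1 = q.1 then S p.1 p.2 q.2 else 0) :
    (Matrix.of (fun p q : Fin k × Fin n => P p.2 q.2) + Λ).det =
      P.det * ((∑ l, (S l)⁻¹ + P⁻¹)⁻¹.det)⁻¹ * ∏ l, (S l).det := by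
  have hPdet : IsUnit P.det := isUnit_iff_ne_zero.2 hP.det_pos.ne'
  have hSinv : ∀ l, S l * (S l)⁻¹ = 1 := fun l =>
    Matrix.mul_nonsing_inv _ (isUnit_iff_ne_zero.2 (hS l).det_pos.ne')
  set U : Matrix (Fin k × Fin n) (Fin n) ℝ :=
    Matrix.of (fun p j => if p.2 = j then 1 else 0) with hU
  set Λi : Matrix (Fin k × Fin n) (Fin k × Fin n) ℝ :=
    Matrix.of (fun p q => if p.1 = q.1 then (S p.1)⁻¹ p.2 q.2 else 0) with hΛi
  -- Λ * Λi = 1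
  have hΛΛi : Λ * Λi = 1 := by
    ext p q
    simp only [Matrix.mul_apply, hΛ, hΛi, Matrix.of_apply, Fintype.sum_prod_type,
      ite_mul, zero_mul, mul_ite, mul_zero]
    rw [Finset.sum_eq_single q.1 (by intro b _ hb; simp [hb]) (by simp)]
    simp only [if_pos rfl]
    by_cases h : p.1 = q.1
    · rw [h]
      have := congrArg (fun M => M p.2 q.2) (hSinv q.1)
      simp only [Matrix.mul_apply] at this
      simp [this, Matrix.one_apply, Prod.ext_iff, h]
    · simp [h, Matrix.one_apply, Prod.ext_iff]
  -- the low-rank part equals U * P * Uᵀ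
  have hM : Matrix.of (fun p q : Fin k × Fin n => P p.2 q.2) = U * P * U.transpose := by
    ext p q
    simp [Matrix.mul_apply, hU, Matrix.transpose_apply, Finset.sum_ite_eq,
      Finset.sum_ite_eq']
  -- Uᵀ * Λi * U = ∑ (S l)⁻¹
  have hUΛU : U.transpose * Λi * U = ∑ l, (S l)⁻¹ := by
    ext i j
    simp only [Matrix.mul_apply, Matrix.transpose_apply, hU, hΛi, Matrix.of_apply,
      Fintype.sum_prod_type, Matrix.sum_apply, ite_mul, zero_mul, mul_ite, mul_zero,
      one_mul, mul_one]
    simp [Finset.sum_ite_eq', Finset.mem_univ, if_true]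
  have hdetΛ : Λ.det = ∏ l, (S l).det := by
    have : Λ = (Matrix.blockDiagonal S).submatrix (Equiv.prodComm (Fin k) (Fin n))
        (Equiv.prodComm (Fin k) (Fin n)) := by
      ext p q
      simp [hΛ, Matrix.blockDiagonal_apply, Matrix.submatrix_apply, eq_comm]
    rw [this, Matrix.det_submatrix_equiv_self, Matrix.det_blockDiagonal]
  -- main factorization
  have key : (Matrix.of (fun p q : Fin k × Fin n => P p.2 q.2) + Λ).det
      = Λ.det * (1 + P * (∑ l, (S l)⁻¹)).det := by
    have : Matrix.of (fun p q : Fin k × Fin n => P p.2 q.2) + Λ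
        = Λ * (1 + (Λi * U) * (P * U.transpose)) := by
      rw [Matrix.mul_add, Matrix.mul_one, hM]
      rw [show Λ * (Λi * U * (P * U.transpose)) = (Λ * Λi) * (U * P * U.transpose) by
        simp only [Matrix.mul_assoc], hΛΛi, Matrix.one_mul]
      exact add_comm _ _
    rw [this, Matrix.det_mul, Matrix.det_one_add_mul_comm,
      show P * U.transpose * (Λi * U) = P * (∑ l, (S l)⁻¹) by
        rw [← hUΛU]; simp only [Matrix.mul_assoc]]
  rw [key, hdetΛ]
  have h1 : (1 : Matrix (Fin n) (Fin n) ℝ) + P * (∑ l, (S l)⁻¹)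
      = P * (P⁻¹ + ∑ l, (S l)⁻¹) := by
    rw [Matrix.mul_add, Matrix.mul_nonsing_inv _ hPdet]
  have h2 : ((∑ l, (S l)⁻¹ + P⁻¹)⁻¹.det)⁻¹ = (P⁻¹ + ∑ l, (S l)⁻¹).det := by
    rw [Matrix.det_nonsing_inv, add_comm]
    simp [Ring.inverse_eq_inv]
  rw [h1, Matrix.det_mul, h2]
  ring
end

section
/- Let $\gamma > 0$ and define $g(n) = \frac{1-e^{-2/(n\gamma)}}{(1-e^{-1/(n\gamma)})(n-(n-2)e^{-1/(n\gamma)})}$ for integers $n \ge 2$. Then $g(n) > 0$ for all $n \ge 2$ and $\inf_{n\ge 2} g(n) > 0$; in particular $\tau^2 g(n)$, the variance of the generalized least squares mean estimator, is bounded away from $0$ uniformly in $n$, so the estimator is not consistent as $n \to \infty$. -/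
lemma key_18 (γ : ℝ) (hγ : 0 < γ) (n : ℕ) (hn : 2 ≤ n) :
    γ / (2 * γ + 1) ≤ (1 - Real.exp (-2 / (n * γ))) /
      ((1 - Real.exp (-1 / (n * γ))) * ((n : ℝ) - ((n : ℝ) - 2) * Real.exp (-1 / (n * γ)))) := by
  have hn2 : (2 : ℝ) ≤ (n : ℝ) := by exact_mod_cast hn
  have hn0 : (0 : ℝ) < (n : ℝ) := by linarith
  have hx : (0 : ℝ) < 1 / ((n : ℝ) * γ) := by positivity
  set x : ℝ := 1 / ((n : ℝ) * γ) with hxdef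
  have hneg : -1 / ((n : ℝ) * γ) = -x := by rw [hxdef]; ring
  set u : ℝ := Real.exp (-x) with hudef
  have hu0 : 0 < u := Real.exp_pos _
  have hu1 : u < 1 := by
    rw [hudef]; exact Real.exp_lt_one_iff.mpr (by linarith)
  have h1u : 1 - u ≤ x := by
    have := Real.add_one_le_exp (-x)
    rw [hudef]; linarith
  have hexp2 : Real.exp (-2 / ((n : ℝ) * γ)) = u * u := by
    have hnne : (n : ℝ) ≠ 0 := ne_of_gt hn0
    rw [hudef, ← Real.exp_add]
    congr 1
    rw [hxdef]
    field_simp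
    ring
  rw [hexp2, hneg, ← hudef]
  have hfact : (1 : ℝ) - u * u = (1 - u) * (1 + u) := by ring
  have hden : (n : ℝ) - ((n : ℝ) - 2) * u = (n : ℝ) * (1 - u) + 2 * u := by ring
  rw [hfact, hden]
  have h1u0 : 0 < 1 - u := by linarith
  rw [mul_div_mul_left _ _ (ne_of_gt h1u0)]
  have hD0 : 0 < (n : ℝ) * (1 - u) + 2 * u := by
    have : 0 ≤ (n : ℝ) * (1 - u) := by positivity
    linarith
  have hDle : (n : ℝ) * (1 - u) + 2 * u ≤ 1 / γ + 2 := by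
    have h1 : (n : ℝ) * (1 - u) ≤ (n : ℝ) * x := by
      exact mul_le_mul_of_nonneg_left h1u (le_of_lt hn0)
    have h2 : (n : ℝ) * x = 1 / γ := by
      rw [hxdef]; field_simp
    nlinarith
  have heq : γ / (2 * γ + 1) = 1 / (1 / γ + 2) := by
    rw [div_eq_div_iff (by linarith) (by positivity)]
    field_simp
    ring
  rw [heq]
  exact div_le_div₀ (by linarith) (by linarith) hD0 hDle

theorem stmt_18 (γ : ℝ) (hγ : 0 < γ) :
    (∀ n : ℕ, 2 ≤ n →
      0 < (1 - Real.exp (-2 / (n * γ))) /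
        ((1 - Real.exp (-1 / (n * γ))) * ((n : ℝ) - ((n : ℝ) - 2) * Real.exp (-1 / (n * γ))))) ∧
    ∃ c : ℝ, 0 < c ∧ ∀ n : ℕ, 2 ≤ n →
      c ≤ (1 - Real.exp (-2 / (n * γ))) /
        ((1 - Real.exp (-1 / (n * γ))) * ((n : ℝ) - ((n : ℝ) - 2) * Real.exp (-1 / (n * γ)))) := by
  have hc : 0 < γ / (2 * γ + 1) := by positivity
  refine ⟨fun n hn => lt_of_lt_of_le hc (key_18 γ hγ n hn),
    γ / (2 * γ + 1), hc, fun n hn => key_18 γ hγ n hn⟩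
end
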